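/- For every ε > 0 there exists a unique representation basis A of ℤ such that A(−x, x) ≥ (1 − ε)√x for infinitely many positive integers x. Consequently c_𝒜 ≥ 1, where c_𝒜 = sup over unique representation bases A of limsup_{x→∞} A(−x,x)/√x. -/

import Mathlib

noncomputable def repCount (A : Set ℤ) (n : ℤ) : ℕ :=
  {p : ℤ × ℤ | p.1 ∈ A ∧ p.2 ∈ A ∧ p.1 ≤ p.2 ∧ p.1 + p.2 = n}.ncard

def UniqueRepBasis (A : Set ℤ) : Prop := ∀ n : ℤ, repCount A n = 1

def IsSidon (S : Set ℤ) : Prop :=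
  ∀ a ∈ S, ∀ b ∈ S, ∀ c ∈ S, ∀ d ∈ S, a + b = c + d → (a = c ∧ b = d) ∨ (a = d ∧ b = c)

theorem isSidon_subset {S S' : Set ℤ} (h : S ⊆ S') (hS : IsSidon S') : IsSidon S :=
  fun a ha b hb c hc d hd hs => hS a (h ha) b (h hb) c (h hc) d (h hd) hs

theorem isSidon_empty : IsSidon (∅ : Set ℤ) := by intro a ha; simp at ha

theorem isSidon_image_add {T : Finset ℤ} (hT : IsSidon ↑T) (c : ℤ) :
    IsSidon ↑(T.image (· + c)) := by
  intro a ha b hb x hx y hy h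
  simp only [Finset.coe_image, Set.mem_image, Finset.mem_coe] at ha hb hx hy
  obtain ⟨a', ha', rfl⟩ := ha
  obtain ⟨b', hb', rfl⟩ := hb
  obtain ⟨x', hx', rfl⟩ := hx
  obtain ⟨y', hy', rfl⟩ := hy
  rcases hT a' ha' b' hb' x' hx' y' hy' (by omega) with ⟨h1, h2⟩ | ⟨h1, h2⟩
  · exact Or.inl ⟨by omega, by omega⟩
  · exact Or.inr ⟨by omega, by omega⟩

theorem isSidon_pair (u v : ℤ) : IsSidon ↑({u, v} : Finset ℤ) := by
  intro a ha b hb c hc d hd h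
  simp only [Finset.coe_insert, Set.mem_insert_iff, Finset.coe_singleton,
    Set.mem_singleton_iff] at ha hb hc hd
  rcases ha with rfl | rfl <;> rcases hb with rfl | rfl <;>
    rcases hc with rfl | rfl <;> rcases hd with rfl | rfl <;> omega

theorem isSidon_union {F G : Finset ℤ}
    (hF : IsSidon ↑F) (hG : IsSidon ↑G)
    (h1 : ∀ f ∈ F, ∀ f' ∈ F, ∀ g ∈ G, ∀ g' ∈ G, f + g = f' + g' → f = f' ∧ g = g')
    (h2 : ∀ f ∈ F, ∀ f' ∈ F, ∀ g ∈ G, ∀ g' ∈ G, f + f' ≠ g + g')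
    (h3 : ∀ f ∈ F, ∀ f' ∈ F, ∀ f'' ∈ F, ∀ g ∈ G, f + f' ≠ f'' + g)
    (h4 : ∀ f ∈ F, ∀ g ∈ G, ∀ g' ∈ G, ∀ g'' ∈ G, f + g ≠ g' + g'') :
    IsSidon ↑(F ∪ G) := by
  intro a ha b hb c hc d hd h
  simp only [Finset.coe_union, Set.mem_union, Finset.mem_coe] at ha hb hc hd
  rcases ha with ha | ha <;> rcases hb with hb | hb <;>
    rcases hc with hc | hc <;> rcases hd with hd | hd
  · exact hF a ha b hb c hc d hd h
  · exact absurd (by linarith) (h3 a ha b hb c hc d hd)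
  · exact absurd (by linarith) (h3 a ha b hb d hd c hc)
  · exact absurd (by linarith) (h2 a ha b hb c hc d hd)
  · exact absurd (by linarith) (h3 c hc d hd a ha b hb)
  · exact Or.inl (h1 a ha c hc b hb d hd (by linarith))
  · exact (fun ⟨u, v⟩ => Or.inr ⟨u, v⟩) (h1 a ha d hd b hb c hc (by linarith))
  · exact absurd (by linarith) (h4 a ha b hb c hc d hd)
  · exact absurd (by linarith) (h3 c hc d hd b hb a ha)
  · exact (fun ⟨u, v⟩ => Or.inr ⟨v, u⟩) (h1 b hb c hc a ha d hd (by linarith))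
  · exact (fun ⟨u, v⟩ => Or.inl ⟨v, u⟩) (h1 b hb d hd a ha c hc (by linarith))
  · exact absurd (by linarith) (h4 b hb a ha c hc d hd)
  · exact absurd (by linarith) (h2 c hc d hd a ha b hb)
  · exact absurd (by linarith) (h4 c hc d hd a ha b hb)
  · exact absurd (by linarith) (h4 d hd c hc a ha b hb)
  · exact hG a ha b hb c hc d hd h

theorem bose (p : ℕ) (hp : p.Prime) :
    ∃ T : Finset ℤ, T.card = p ∧ (∀ t ∈ T, 0 ≤ t ∧ t < (p : ℤ) ^ 2 - 1) ∧ IsSidon ↑T := by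
  haveI : Fact p.Prime := ⟨hp⟩
  have hp2 : 2 ≤ p := hp.two_le
  have hpsq : p + 1 ≤ p ^ 2 := by nlinarith
  set F := GaloisField p 2 with hF
  haveI : Fintype F := Fintype.ofFinite _
  have hcard : Fintype.card F = p ^ 2 := by
    have := GaloisField.card p 2 (by norm_num)
    rwa [Nat.card_eq_fintype_card] at this
  obtain ⟨g, hg⟩ := IsCyclic.exists_generator (α := Fˣ)
  have hord : orderOf g = p ^ 2 - 1 := by
    rw [orderOf_eq_card_of_forall_mem_zpowers hg, Nat.card_units,
      Nat.card_eq_fintype_card, hcard]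
  set θ : F := (g : F) with hθ
  have θnot : ∀ z : ZMod p, algebraMap (ZMod p) F z ≠ θ := by
    intro z h
    have hz0 : z ≠ 0 := by
      rintro rfl
      rw [map_zero] at h
      exact (Units.ne_zero g) h.symm
    have h1 : θ ^ (p - 1) = 1 := by
      rw [← h, ← map_pow, ZMod.pow_card_sub_one_eq_one hz0, map_one]
    have h2 : g ^ (p - 1) = 1 := by
      ext
      push_cast
      exact h1
    have h3 := Nat.le_of_dvd (by omega) (orderOf_dvd_of_pow_eq_one h2)
    rw [hord] at h3
    omega
  -- exponents
  have hne : ∀ a : ZMod p, θ + algebraMap (ZMod p) F a ≠ 0 := by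
    intro a h
    apply θnot (-a)
    rw [map_neg]
    linear_combination -h
  have hex : ∀ a : ZMod p, ∃ k : ℕ, k < p ^ 2 - 1 ∧
      (θ + algebraMap (ZMod p) F a) = θ ^ k := by
    intro a
    have hmem := hg (Units.mk0 _ (hne a))
    rw [← mem_powers_iff_mem_zpowers] at hmem
    obtain ⟨n, hn⟩ := hmem
    have hn' : g ^ n = Units.mk0 _ (hne a) := hn
    refine ⟨n % (p ^ 2 - 1), Nat.mod_lt _ (by omega), ?_⟩
    have hmod : g ^ (n % (p ^ 2 - 1)) = g ^ n := by
      rw [← hord]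
      exact pow_mod_orderOf g n
    rw [hn'] at hmod
    have := congrArg (Units.val) hmod
    push_cast at this
    rw [this, Units.val_mk0]
  choose expo hexlt hexeq using hex
  have expoinj : Function.Injective expo := by
    intro a b hab
    have h1 : θ + algebraMap (ZMod p) F a = θ + algebraMap (ZMod p) F b := by
      rw [hexeq a, hexeq b, hab]
    exact (algebraMap (ZMod p) F).injective (add_left_cancel h1)
  refine ⟨(Finset.univ : Finset (ZMod p)).image (fun a => ((expo a : ℤ))), ?_, ?_, ?_⟩
  · rw [Finset.card_image_of_injective _ (fun a b h => expoinj (by exact_mod_cast h)),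
      Finset.card_univ, ZMod.card]
  · intro t ht
    simp only [Finset.mem_image] at ht
    obtain ⟨a, -, rfl⟩ := ht
    have h1 := hexlt a
    have h2 : ((expo a : ℤ)) < ((p ^ 2 - 1 : ℕ) : ℤ) := by exact_mod_cast h1
    have h3 : ((p ^ 2 - 1 : ℕ) : ℤ) = (p : ℤ) ^ 2 - 1 := by
      push_cast [Nat.cast_sub (by nlinarith : 1 ≤ p ^ 2)]
      ring
    constructor
    · positivity
    · omega
  · rintro x hx y hy z hz w hw hsum
    simp only [Finset.coe_image, Set.mem_image, Finset.coe_univ, Set.mem_univ, true_and,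
      Finset.mem_coe, Finset.mem_image, Finset.mem_univ] at hx hy hz hw
    obtain ⟨a, rfl⟩ := hx
    obtain ⟨b, rfl⟩ := hy
    obtain ⟨c, rfl⟩ := hz
    obtain ⟨d, rfl⟩ := hw
    have hnat : expo a + expo b = expo c + expo d := by exact_mod_cast hsum
    have hprodF : (θ + algebraMap (ZMod p) F a) * (θ + algebraMap (ZMod p) F b)
        = (θ + algebraMap (ZMod p) F c) * (θ + algebraMap (ZMod p) F d) := by
      rw [hexeq a, hexeq b, hexeq c, hexeq d, ← pow_add, ← pow_add, hnat]
    have key : algebraMap (ZMod p) F (a + b - c - d) * θ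
        = algebraMap (ZMod p) F (c * d - a * b) := by
      push_cast [map_add, map_sub, map_mul]
      linear_combination hprodF
    by_cases hu : a + b - c - d = 0
    · rw [hu, map_zero, zero_mul] at key
      have hprod : a * b = c * d := by
        have h5 : c * d - a * b = 0 := (algebraMap (ZMod p) F).injective (by rw [map_zero, ← key])
        linear_combination -h5
      have hsum2 : a + b = c + d := by linear_combination hu
      have h6 : (a - c) * (a - d) = 0 := by linear_combination a * hsum2 - hprod
      rcases mul_eq_zero.mp h6 with h | h
      · have hac : a = c := by linear_combination h
        have hbd : b = d := by linear_combination hsum2 - hac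
        exact Or.inl ⟨by rw [hac], by rw [hbd]⟩
      · have had : a = d := by linear_combination h
        have hbc : b = c := by linear_combination hsum2 - had
        exact Or.inr ⟨by rw [had], by rw [hbc]⟩
    · exfalso
      apply θnot ((c * d - a * b) / (a + b - c - d))
      have hmapu : algebraMap (ZMod p) F (a + b - c - d) ≠ 0 := by
        intro h
        exact hu ((algebraMap (ZMod p) F).injective (by rw [h, map_zero]))
      rw [map_div₀, div_eq_iff hmapu]
      linear_combination -key

set_option maxHeartbeats 1000000 in
theorem block_step (F : Finset ℤ) (hF : IsSidon ↑F) (K : ℕ) (δ : ℝ)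
    (hδ0 : 0 < δ) (hδ1 : δ ≤ 1) :
    ∃ (S : Finset ℤ) (x : ℕ), K < x ∧ IsSidon ↑(F ∪ S) ∧
      (∀ s ∈ S, (K : ℤ) < |s| ∧ -(x : ℤ) ≤ s ∧ s ≤ (x : ℤ)) ∧
      (1 - δ) * Real.sqrt x ≤ (S.card : ℝ) := by
  classical
  obtain ⟨M, hM1, hMf⟩ : ∃ M : ℤ, 1 ≤ M ∧ ∀ f ∈ F, -M ≤ f ∧ f ≤ M := by
    refine ⟨(∑ f ∈ F, |f|) + 1, ?_, ?_⟩
    · have : 0 ≤ ∑ f ∈ F, |f| := Finset.sum_nonneg fun i _ => abs_nonneg i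
      omega
    · intro f hf
      have h1 : |f| ≤ ∑ g ∈ F, |g| := Finset.single_le_sum (fun i _ => abs_nonneg i) hf
      have h2 := abs_le.mp h1
      constructor <;> omega
  set W : ℤ := 4 * M + 4 with hWdef
  set FFF : Finset ℤ := (F ×ˢ (F ×ˢ F)).image (fun q => q.1 + q.2.1 - q.2.2) with hFFFdef
  have hFFFmem : ∀ f ∈ F, ∀ f' ∈ F, ∀ f'' ∈ F, f + f' - f'' ∈ FFF := by
    intro f hf f' hf' f'' hf''
    exact Finset.mem_image.mpr ⟨(f, f', f''), by simp [hf, hf', hf''], rfl⟩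
  have hFFFcard : FFF.card ≤ F.card ^ 3 := by
    refine Finset.card_image_le.trans ?_
    rw [Finset.card_product, Finset.card_product]
    exact le_of_eq (by ring)
  set Cnat : ℕ := 40 * (M.toNat + 1) + 2 * F.card ^ 3 with hCdef
  set N₀ : ℕ := max (max (K + 2) (⌈(Cnat : ℝ) / δ⌉₊ + 1)) (10 * (M.toNat + 10)) with hN₀def
  obtain ⟨p, hpN, hpP⟩ := Nat.exists_infinite_primes N₀
  have hpK : K + 2 ≤ p := le_trans (le_trans (le_max_left _ _) (le_max_left _ _)) hpN
  have hpC : ⌈(Cnat : ℝ) / δ⌉₊ + 1 ≤ p :=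
    le_trans (le_trans (le_max_right _ _) (le_max_left _ _)) hpN
  have hpM : 10 * (M.toNat + 10) ≤ p := le_trans (le_max_right _ _) hpN
  have hMtoNat : (M.toNat : ℤ) = M := Int.toNat_of_nonneg (by omega)
  have hp100 : 100 ≤ p := by omega
  have hpMz : 10 * M + 100 ≤ (p : ℤ) := by
    have : ((10 * (M.toNat + 10) : ℕ) : ℤ) ≤ (p : ℤ) := by exact_mod_cast hpM
    push_cast at this
    omega
  obtain ⟨T, hTcard, hTbound, hTsidon⟩ := bose p hpP
  set m : ℤ := (p : ℤ) ^ 2 - 1 with hmdef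
  set hI : ℤ := m / 2 with hIdef
  have hodd : Odd p := hpP.odd_of_ne_two (by omega)
  have h2I : 2 * hI = m := by
    obtain ⟨k, hk⟩ := hodd
    have h2 : m = 2 * (2 * (k : ℤ) ^ 2 + 2 * k) := by
      rw [hmdef, hk]; push_cast; ring
    rw [hIdef, h2, Int.mul_ediv_cancel_left _ (by norm_num)]
  have hWh : 3 * W ≤ hI := by
    have h6 : 6 * W ≤ m := by
      rw [hmdef, hWdef]
      nlinarith [sq_nonneg ((p : ℤ) - (10 * M + 100)), hM1, hpMz]
    omega
  have hKh : (K : ℤ) + 1 ≤ hI := by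
    have hKp : (K : ℤ) + 2 ≤ (p : ℤ) := by exact_mod_cast hpK
    have hK0 : (0 : ℤ) ≤ (K : ℤ) := Int.natCast_nonneg K
    have : 2 * (K : ℤ) + 2 ≤ m := by
      rw [hmdef]
      nlinarith [sq_nonneg ((p : ℤ) - ((K : ℤ) + 2))]
    omega
  -- predicates
  set Bc : ℤ → Prop := fun t => ∀ t' ∈ T, t + t' < m - 2 * M ∨ m + 2 * M < t + t' with hBcdef
  set Ec : ℤ → Prop :=
    fun t => ∀ t' ∈ T, t' ≠ t → (t - t' < -(2 * M) ∨ 2 * M < t - t') with hEcdef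
  set g1 : ℤ → Prop :=
    fun t => W ≤ t ∧ t ≤ hI - W ∧ Bc t ∧ Ec t ∧ t + hI ∉ FFF with hg1def
  set g2 : ℤ → Prop :=
    fun t => hI + W ≤ t ∧ t ≤ m - W ∧ Bc t ∧ Ec t ∧ t + (hI - 2 * m) ∉ FFF with hg2def
  set T1 : Finset ℤ := T.filter g1 with hT1def
  set T2 : Finset ℤ := T.filter g2 with hT2def
  set S1 : Finset ℤ := T1.image (· + hI) with hS1def
  set S2 : Finset ℤ := T2.image (· + (hI - 2 * m)) with hS2def
  set S : Finset ℤ := S1 ∪ S2 with hSdef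
  have hS1e : ∀ s ∈ S1, ∃ t, t ∈ T ∧ g1 t ∧ s = t + hI := by
    intro s hs
    obtain ⟨t, ht, rfl⟩ := Finset.mem_image.mp hs
    obtain ⟨htT, htg⟩ := Finset.mem_filter.mp ht
    exact ⟨t, htT, htg, rfl⟩
  have hS2e : ∀ s ∈ S2, ∃ t, t ∈ T ∧ g2 t ∧ s = t + (hI - 2 * m) := by
    intro s hs
    obtain ⟨t, ht, rfl⟩ := Finset.mem_image.mp hs
    obtain ⟨htT, htg⟩ := Finset.mem_filter.mp ht
    exact ⟨t, htT, htg, rfl⟩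
  have hS1b : ∀ s ∈ S1, hI + W ≤ s ∧ s ≤ m - W := by
    intro s hs
    obtain ⟨t, htT, htg, rfl⟩ := hS1e s hs
    obtain ⟨e1, e2, -, -, -⟩ := htg
    omega
  have hS2b : ∀ s ∈ S2, W - m ≤ s ∧ s ≤ -hI - W := by
    intro s hs
    obtain ⟨t, htT, htg, rfl⟩ := hS2e s hs
    obtain ⟨e1, e2, -, -, -⟩ := htg
    omega
  have hSb : ∀ s ∈ S, (hI + W ≤ s ∧ s ≤ m - W) ∨ (W - m ≤ s ∧ s ≤ -hI - W) := by
    intro s hs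
    rcases Finset.mem_union.mp hs with h | h
    · exact Or.inl (hS1b s h)
    · exact Or.inr (hS2b s h)
  -- Sidon property of S
  have hT1sidon : IsSidon ↑T1 :=
    isSidon_subset (Finset.coe_subset.mpr (Finset.filter_subset _ _)) hTsidon
  have hT2sidon : IsSidon ↑T2 :=
    isSidon_subset (Finset.coe_subset.mpr (Finset.filter_subset _ _)) hTsidon
  have hSsidon : IsSidon ↑S := by
    refine isSidon_union (isSidon_image_add hT1sidon hI) (isSidon_image_add hT2sidon (hI - 2 * m))
      ?_ ?_ ?_ ?_
    · intro a ha b hb c hc d hd h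
      obtain ⟨t, htT, htg, rfl⟩ := hS1e a ha
      obtain ⟨t', ht'T, ht'g, rfl⟩ := hS1e b hb
      obtain ⟨v, hvT, hvg, rfl⟩ := hS2e c hc
      obtain ⟨v', hv'T, hv'g, rfl⟩ := hS2e d hd
      have heq : t + v = t' + v' := by omega
      rcases hTsidon t (Finset.mem_coe.mpr htT) v (Finset.mem_coe.mpr hvT)
        t' (Finset.mem_coe.mpr ht'T) v' (Finset.mem_coe.mpr hv'T) heq with ⟨u1, u2⟩ | ⟨u1, u2⟩
      · exact ⟨by omega, by omega⟩
      · exfalso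
        have b1 := htg.2.1
        have b2 := hv'g.1
        omega
    · intro a ha b hb c hc d hd
      have b1 := hS1b a ha; have b2 := hS1b b hb
      have b3 := hS2b c hc; have b4 := hS2b d hd
      omega
    · intro a ha b hb c hc d hd
      have b1 := hS1b a ha; have b2 := hS1b b hb
      have b3 := hS1b c hc; have b4 := hS2b d hd
      omega
    · intro a ha b hb c hc d hd
      have b1 := hS1b a ha; have b2 := hS2b b hb
      have b3 := hS2b c hc; have b4 := hS2b d hd
      omega
  have hFS : IsSidon ↑(F ∪ S) := by
    refine isSidon_union hF hSsidon ?_ ?_ ?_ ?_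
    · -- h1 : cross sums distinct
      intro f hf f' hf' s hs s' hs' h
      by_cases hss : s = s'
      · exact ⟨by omega, hss⟩
      · exfalso
        have e1 := hMf f hf; have e2 := hMf f' hf'
        rcases Finset.mem_union.mp hs with h1 | h1 <;> rcases Finset.mem_union.mp hs' with h2 | h2
        · obtain ⟨t, htT, htg, rfl⟩ := hS1e s h1
          obtain ⟨t', ht'T, ht'g, rfl⟩ := hS1e s' h2
          have hEt := htg.2.2.2.1
          have := hEt t' ht'T (by omega)
          omega
        · have b1 := hS1b s h1; have b2 := hS2b s' h2; omega
        · have b1 := hS2b s h1; have b2 := hS1b s' h2; omega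
        · obtain ⟨t, htT, htg, rfl⟩ := hS2e s h1
          obtain ⟨t', ht'T, ht'g, rfl⟩ := hS2e s' h2
          have hEt := htg.2.2.2.1
          have := hEt t' ht'T (by omega)
          omega
    · -- h2 : F+F vs S+S
      intro f hf f' hf' s hs s' hs'
      have e1 := hMf f hf; have e2 := hMf f' hf'
      rcases Finset.mem_union.mp hs with h1 | h1 <;> rcases Finset.mem_union.mp hs' with h2 | h2
      · have b1 := hS1b s h1; have b2 := hS1b s' h2; omega
      · obtain ⟨t, htT, htg, rfl⟩ := hS1e s h1
        obtain ⟨v, hvT, hvg, rfl⟩ := hS2e s' h2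
        have hBt := htg.2.2.1
        have := hBt v hvT
        omega
      · obtain ⟨v, hvT, hvg, rfl⟩ := hS2e s h1
        obtain ⟨t, htT, htg, rfl⟩ := hS1e s' h2
        have hBt := htg.2.2.1
        have := hBt v hvT
        omega
      · have b1 := hS2b s h1; have b2 := hS2b s' h2; omega
    · -- h3 : F+F vs F+S
      intro f hf f' hf' f'' hf'' s hs heq
      have hmem : s ∈ FFF := by
        have := hFFFmem f hf f' hf' f'' hf''
        rwa [show f + f' - f'' = s by omega] at this
      rcases Finset.mem_union.mp hs with h1 | h1
      · obtain ⟨t, htT, htg, rfl⟩ := hS1e s h1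
        exact htg.2.2.2.2 hmem
      · obtain ⟨t, htT, htg, rfl⟩ := hS2e s h1
        exact htg.2.2.2.2 hmem
    · -- h4 : F+S vs S+S
      intro f hf s hs s' hs' s'' hs''
      have e1 := hMf f hf
      rcases hSb s hs with ⟨b1, b2⟩ | ⟨b1, b2⟩ <;>
        rcases hSb s' hs' with ⟨c1, c2⟩ | ⟨c1, c2⟩ <;>
          rcases hSb s'' hs'' with ⟨d1, d2⟩ | ⟨d1, d2⟩ <;> omega
  -- counting
  have hS1card : S1.card = T1.card :=
    Finset.card_image_of_injective _ (add_left_injective hI)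
  have hS2card : S2.card = T2.card :=
    Finset.card_image_of_injective _ (add_left_injective (hI - 2 * m))
  have hdisj : Disjoint S1 S2 := by
    rw [Finset.disjoint_left]
    intro s h1 h2
    have b1 := hS1b s h1; have b2 := hS2b s h2
    omega
  have hScard : S.card = T1.card + T2.card := by
    rw [hSdef, Finset.card_union_of_disjoint hdisj, hS1card, hS2card]
  set R : Finset ℤ := T.filter (fun t => ¬ g1 t ∧ ¬ g2 t) with hRdef
  have hTcount : p ≤ T1.card + T2.card + R.card := by
    have hsub : T ⊆ T1 ∪ T2 ∪ R := by
      intro t ht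
      by_cases h1 : g1 t
      · exact Finset.mem_union_left _ (Finset.mem_union_left _ (Finset.mem_filter.mpr ⟨ht, h1⟩))
      · by_cases h2 : g2 t
        · exact Finset.mem_union_left _
            (Finset.mem_union_right _ (Finset.mem_filter.mpr ⟨ht, h2⟩))
        · exact Finset.mem_union_right _ (Finset.mem_filter.mpr ⟨ht, h1, h2⟩)
    calc p = T.card := hTcard.symm
      _ ≤ (T1 ∪ T2 ∪ R).card := Finset.card_le_card hsub
      _ ≤ (T1 ∪ T2).card + R.card := Finset.card_union_le _ _
      _ ≤ T1.card + T2.card + R.card := by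
          have := Finset.card_union_le T1 T2
          omega
  -- bounding R
  set R1 : Finset ℤ := T.filter (fun t => t < W) with hR1def
  set R2 : Finset ℤ := T.filter (fun t => hI - W < t ∧ t < hI + W) with hR2def
  set R3 : Finset ℤ := T.filter (fun t => m - W < t) with hR3def
  set R4 : Finset ℤ := T.filter
    (fun t => ∃ t' ∈ T, m - 2 * M ≤ t + t' ∧ t + t' ≤ m + 2 * M) with hR4def
  set R5 : Finset ℤ := T.filter
    (fun t => ∃ t' ∈ T, t' ≠ t ∧ -(2 * M) ≤ t - t' ∧ t - t' ≤ 2 * M) with hR5def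
  set R6 : Finset ℤ := T.filter (fun t => t + hI ∈ FFF) with hR6def
  set R7 : Finset ℤ := T.filter (fun t => t + (hI - 2 * m) ∈ FFF) with hR7def
  have hRsub : R ⊆ R1 ∪ R2 ∪ R3 ∪ R4 ∪ R5 ∪ R6 ∪ R7 := by
    intro t ht
    obtain ⟨htT, hng1, hng2⟩ := Finset.mem_filter.mp ht
    have hbd := hTbound t htT
    by_cases hB : Bc t
    · by_cases hE : Ec t
      · by_cases hz1 : W ≤ t ∧ t ≤ hI - W
        · have hC : t + hI ∈ FFF := by
            by_contra hC
            exact hng1 ⟨hz1.1, hz1.2, hB, hE, hC⟩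
          exact Finset.mem_union_left _ (Finset.mem_union_right _ (Finset.mem_filter.mpr ⟨htT, hC⟩))
        · by_cases hz2 : hI + W ≤ t ∧ t ≤ m - W
          · have hC : t + (hI - 2 * m) ∈ FFF := by
              by_contra hC
              exact hng2 ⟨hz2.1, hz2.2, hB, hE, hC⟩
            exact Finset.mem_union_right _ (Finset.mem_filter.mpr ⟨htT, hC⟩)
          · have hpos : t < W ∨ (hI - W < t ∧ t < hI + W) ∨ m - W < t := by omega
            rcases hpos with h | h | h
            · exact Finset.mem_union_left _ (Finset.mem_union_left _ (Finset.mem_union_left _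
                (Finset.mem_union_left _ (Finset.mem_union_left _ (Finset.mem_union_left _
                (Finset.mem_filter.mpr ⟨htT, h⟩))))))
            · exact Finset.mem_union_left _ (Finset.mem_union_left _ (Finset.mem_union_left _
                (Finset.mem_union_left _ (Finset.mem_union_left _ (Finset.mem_union_right _
                (Finset.mem_filter.mpr ⟨htT, h.1, h.2⟩))))))
            · exact Finset.mem_union_left _ (Finset.mem_union_left _ (Finset.mem_union_left _
                (Finset.mem_union_left _ (Finset.mem_union_right _
                (Finset.mem_filter.mpr ⟨htT, h⟩)))))
      · have hE' : ¬ ∀ t' ∈ T, t' ≠ t → (t - t' < -(2 * M) ∨ 2 * M < t - t') := hE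
        push_neg at hE'
        obtain ⟨t', ht'T, ht'ne, hlo, hhi⟩ := hE'
        exact Finset.mem_union_left _ (Finset.mem_union_left _ (Finset.mem_union_right _
          (Finset.mem_filter.mpr ⟨htT, t', ht'T, ht'ne, hlo, hhi⟩)))
    · have hB' : ¬ ∀ t' ∈ T, t + t' < m - 2 * M ∨ m + 2 * M < t + t' := hB
      push_neg at hB'
      obtain ⟨t', ht'T, hlo, hhi⟩ := hB'
      exact Finset.mem_union_left _ (Finset.mem_union_left _ (Finset.mem_union_left _
        (Finset.mem_union_right _ (Finset.mem_filter.mpr ⟨htT, t', ht'T, hlo, hhi⟩))))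
  have hR1c : ((R1.card : ℤ)) ≤ W := by
    have hsub : R1 ⊆ Finset.Icc (0 : ℤ) (W - 1) := by
      intro t ht
      obtain ⟨htT, hlt⟩ := Finset.mem_filter.mp ht
      have := hTbound t htT
      rw [Finset.mem_Icc]
      omega
    have h1 := Finset.card_le_card hsub
    rw [Int.card_Icc] at h1
    have h2 : ((W - 1 + 1 - 0).toNat : ℤ) = W := by
      rw [Int.toNat_of_nonneg (by omega)]; omega
    calc ((R1.card : ℤ)) ≤ ((W - 1 + 1 - 0).toNat : ℤ) := by exact_mod_cast h1
      _ = W := h2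
  have hR2c : ((R2.card : ℤ)) ≤ 2 * W := by
    have hsub : R2 ⊆ Finset.Icc (hI - W + 1) (hI + W - 1) := by
      intro t ht
      obtain ⟨htT, hlt⟩ := Finset.mem_filter.mp ht
      rw [Finset.mem_Icc]
      omega
    have h1 := Finset.card_le_card hsub
    rw [Int.card_Icc] at h1
    have h2 : ((hI + W - 1 + 1 - (hI - W + 1)).toNat : ℤ) = 2 * W - 1 := by
      rw [Int.toNat_of_nonneg (by omega)]; omega
    have h3 : ((R2.card : ℤ)) ≤ 2 * W - 1 := by
      calc ((R2.card : ℤ)) ≤ ((hI + W - 1 + 1 - (hI - W + 1)).toNat : ℤ) := by exact_mod_cast h1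
        _ = 2 * W - 1 := h2
    omega
  have hR3c : ((R3.card : ℤ)) ≤ W := by
    have hsub : R3 ⊆ Finset.Icc (m - W + 1) (m - 1) := by
      intro t ht
      obtain ⟨htT, hlt⟩ := Finset.mem_filter.mp ht
      have := hTbound t htT
      rw [Finset.mem_Icc]
      omega
    have h1 := Finset.card_le_card hsub
    rw [Int.card_Icc] at h1
    have h2 : ((m - 1 + 1 - (m - W + 1)).toNat : ℤ) = W - 1 := by
      rw [Int.toNat_of_nonneg (by omega)]; omega
    have h3 : ((R3.card : ℤ)) ≤ W - 1 := by
      calc ((R3.card : ℤ)) ≤ ((m - 1 + 1 - (m - W + 1)).toNat : ℤ) := by exact_mod_cast h1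
        _ = W - 1 := h2
    omega
  have hR4c : ((R4.card : ℤ)) ≤ 2 * (4 * M + 1) := by
    set wf : ℤ → ℤ := fun t =>
      if h : ∃ t' ∈ T, m - 2 * M ≤ t + t' ∧ t + t' ≤ m + 2 * M then h.choose else 0 with hwfdef
    have hw : ∀ t ∈ R4, wf t ∈ T ∧ m - 2 * M ≤ t + wf t ∧ t + wf t ≤ m + 2 * M := by
      intro t ht
      have hex := (Finset.mem_filter.mp ht).2
      have : wf t = hex.choose := by rw [hwfdef]; exact dif_pos hex
      rw [this]
      exact ⟨hex.choose_spec.1, hex.choose_spec.2.1, hex.choose_spec.2.2⟩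
    have hmain : R4.card ≤ 2 * ((R4.image (fun t => t + wf t)).card) := by
      apply Finset.card_le_mul_card_image
      intro b hb
      obtain ⟨t₀, ht₀R, ht₀e⟩ := Finset.mem_image.mp hb
      have hsub2 : (R4.filter (fun a => a + wf a = b)) ⊆ {t₀, wf t₀} := by
        intro t ht
        obtain ⟨htR, hte⟩ := Finset.mem_filter.mp ht
        have h₁ := hw t htR
        have h₂ := hw t₀ ht₀R
        have hTt : t ∈ T := Finset.mem_of_mem_filter _ htR
        have hTt₀ : t₀ ∈ T := Finset.mem_of_mem_filter _ ht₀R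
        have hte' : t + wf t = b := hte
        have ht₀e' : t₀ + wf t₀ = b := ht₀e
        have heq : t + wf t = t₀ + wf t₀ := by omega
        rcases hTsidon t (Finset.mem_coe.mpr hTt) (wf t) (Finset.mem_coe.mpr h₁.1)
          t₀ (Finset.mem_coe.mpr hTt₀) (wf t₀) (Finset.mem_coe.mpr h₂.1) heq with
          ⟨u, -⟩ | ⟨u, -⟩ <;> simp [u]
      exact le_trans (Finset.card_le_card hsub2)
        (le_trans (Finset.card_insert_le _ _) (by simp))
    have himg : (R4.image (fun t => t + wf t)) ⊆ Finset.Icc (m - 2 * M) (m + 2 * M) := by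
      intro b hb
      obtain ⟨t, htR, rfl⟩ := Finset.mem_image.mp hb
      have := hw t htR
      rw [Finset.mem_Icc]
      omega
    have h2 := Finset.card_le_card himg
    rw [Int.card_Icc] at h2
    have h3 : ((m + 2 * M + 1 - (m - 2 * M)).toNat : ℤ) = 4 * M + 1 := by
      rw [Int.toNat_of_nonneg (by omega)]; omega
    have h4 : ((R4.image (fun t => t + wf t)).card : ℤ) ≤ 4 * M + 1 := by
      calc ((R4.image (fun t => t + wf t)).card : ℤ)
          ≤ ((m + 2 * M + 1 - (m - 2 * M)).toNat : ℤ) := by exact_mod_cast h2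
        _ = 4 * M + 1 := h3
    have h5 : ((R4.card : ℤ)) ≤ 2 * ((R4.image (fun t => t + wf t)).card : ℤ) := by
      exact_mod_cast hmain
    omega
  have hR5c : ((R5.card : ℤ)) ≤ 2 * (4 * M + 1) := by
    set wf : ℤ → ℤ := fun t =>
      if h : ∃ t' ∈ T, t' ≠ t ∧ -(2 * M) ≤ t - t' ∧ t - t' ≤ 2 * M then h.choose else 0 with hwfdef
    have hw : ∀ t ∈ R5, wf t ∈ T ∧ wf t ≠ t ∧ -(2 * M) ≤ t - wf t ∧ t - wf t ≤ 2 * M := by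
      intro t ht
      have hex := (Finset.mem_filter.mp ht).2
      have : wf t = hex.choose := by rw [hwfdef]; exact dif_pos hex
      rw [this]
      exact ⟨hex.choose_spec.1, hex.choose_spec.2.1, hex.choose_spec.2.2.1,
        hex.choose_spec.2.2.2⟩
    have hmain : R5.card ≤ 2 * ((R5.image (fun t => t - wf t)).card) := by
      apply Finset.card_le_mul_card_image
      intro b hb
      obtain ⟨t₀, ht₀R, ht₀e⟩ := Finset.mem_image.mp hb
      have hsub2 : (R5.filter (fun a => a - wf a = b)) ⊆ {t₀, wf t₀} := by
        intro t ht
        obtain ⟨htR, hte⟩ := Finset.mem_filter.mp ht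
        have h₁ := hw t htR
        have h₂ := hw t₀ ht₀R
        have hTt : t ∈ T := Finset.mem_of_mem_filter _ htR
        have hTt₀ : t₀ ∈ T := Finset.mem_of_mem_filter _ ht₀R
        have hte' : t - wf t = b := hte
        have ht₀e' : t₀ - wf t₀ = b := ht₀e
        have heq : t + wf t₀ = t₀ + wf t := by omega
        rcases hTsidon t (Finset.mem_coe.mpr hTt) (wf t₀) (Finset.mem_coe.mpr h₂.1)
          t₀ (Finset.mem_coe.mpr hTt₀) (wf t) (Finset.mem_coe.mpr h₁.1) heq with
          ⟨u, -⟩ | ⟨u, -⟩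
        · simp [u]
        · exact absurd u.symm h₁.2.1
      exact le_trans (Finset.card_le_card hsub2)
        (le_trans (Finset.card_insert_le _ _) (by simp))
    have himg : (R5.image (fun t => t - wf t)) ⊆ Finset.Icc (-(2 * M)) (2 * M) := by
      intro b hb
      obtain ⟨t, htR, rfl⟩ := Finset.mem_image.mp hb
      have := hw t htR
      rw [Finset.mem_Icc]
      omega
    have h2 := Finset.card_le_card himg
    rw [Int.card_Icc] at h2
    have h3 : ((2 * M + 1 - -(2 * M)).toNat : ℤ) = 4 * M + 1 := by
      rw [Int.toNat_of_nonneg (by omega)]; omega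
    have h4 : ((R5.image (fun t => t - wf t)).card : ℤ) ≤ 4 * M + 1 := by
      calc ((R5.image (fun t => t - wf t)).card : ℤ)
          ≤ ((2 * M + 1 - -(2 * M)).toNat : ℤ) := by exact_mod_cast h2
        _ = 4 * M + 1 := h3
    have h5 : ((R5.card : ℤ)) ≤ 2 * ((R5.image (fun t => t - wf t)).card : ℤ) := by
      exact_mod_cast hmain
    omega
  have hR6c : R6.card ≤ F.card ^ 3 := by
    refine le_trans (Finset.card_le_card_of_injOn (fun t => t + hI)
      (fun t ht => (Finset.mem_filter.mp ht).2) ?_) hFFFcard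
    intro a _ b _ h
    have h' : a + hI = b + hI := h
    omega
  have hR7c : R7.card ≤ F.card ^ 3 := by
    refine le_trans (Finset.card_le_card_of_injOn (fun t => t + (hI - 2 * m))
      (fun t ht => (Finset.mem_filter.mp ht).2) ?_) hFFFcard
    intro a _ b _ h
    have h' : a + (hI - 2 * m) = b + (hI - 2 * m) := h
    omega
  have hcu : (R.card : ℤ) ≤ (R1.card : ℤ) + R2.card + R3.card + R4.card + R5.card
      + R6.card + R7.card := by
    have c1 := Finset.card_union_le (R1 ∪ R2 ∪ R3 ∪ R4 ∪ R5 ∪ R6) R7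
    have c2 := Finset.card_union_le (R1 ∪ R2 ∪ R3 ∪ R4 ∪ R5) R6
    have c3 := Finset.card_union_le (R1 ∪ R2 ∪ R3 ∪ R4) R5
    have c4 := Finset.card_union_le (R1 ∪ R2 ∪ R3) R4
    have c5 := Finset.card_union_le (R1 ∪ R2) R3
    have c6 := Finset.card_union_le R1 R2
    have h0 := Finset.card_le_card hRsub
    push_cast
    omega
  have hCz : ((Cnat : ℕ) : ℤ) = 40 * (M + 1) + 2 * ((F.card ^ 3 : ℕ) : ℤ) := by
    rw [hCdef]
    push_cast [hMtoNat]
    ring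
  have hRCc : (R.card : ℤ) ≤ (Cnat : ℤ) := by
    rw [hCz]
    have e6 : (R6.card : ℤ) ≤ ((F.card ^ 3 : ℕ) : ℤ) := by exact_mod_cast hR6c
    have e7 : (R7.card : ℤ) ≤ ((F.card ^ 3 : ℕ) : ℤ) := by exact_mod_cast hR7c
    omega
  have hcount : (p : ℤ) - (Cnat : ℤ) ≤ (S.card : ℤ) := by
    have h1 : (p : ℤ) ≤ (T1.card : ℤ) + T2.card + R.card := by exact_mod_cast hTcount
    have h2 : (S.card : ℤ) = (T1.card : ℤ) + T2.card := by exact_mod_cast hScard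
    omega
  -- conclusion
  have hx1 : 1 ≤ p ^ 2 := Nat.one_le_pow 2 p (by omega)
  have hxz : (((p ^ 2 - 1 : ℕ) : ℤ)) = m := by
    rw [hmdef, Nat.cast_sub hx1]
    push_cast
    ring
  refine ⟨S, p ^ 2 - 1, ?_, hFS, ?_, ?_⟩
  · have h1 : (K + 2) * (K + 2) ≤ p * p := Nat.mul_le_mul hpK hpK
    have h2 : p ^ 2 = p * p := sq p
    omega
  · intro s hs
    have hb := hSb s hs
    refine ⟨?_, ?_, ?_⟩
    · rcases hb with ⟨b1, b2⟩ | ⟨b1, b2⟩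
      · rw [abs_of_pos (by omega)]; omega
      · rw [abs_of_neg (by omega)]; omega
    · rw [hxz]; omega
    · rw [hxz]; omega
  · have hxr : ((p ^ 2 - 1 : ℕ) : ℝ) = (p : ℝ) ^ 2 - 1 := by
      rw [Nat.cast_sub hx1]
      push_cast
      ring
    have hsq : Real.sqrt ((p ^ 2 - 1 : ℕ) : ℝ) ≤ (p : ℝ) := by
      rw [show (p : ℝ) = Real.sqrt ((p : ℝ) ^ 2) from (Real.sqrt_sq (by positivity)).symm]
      apply Real.sqrt_le_sqrt
      rw [hxr]
      nlinarith [sq_nonneg (p:ℝ)]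
    have hCp : ((Cnat : ℕ) : ℝ) ≤ δ * p := by
      have h1 : ((Cnat : ℕ) : ℝ) / δ ≤ ((⌈((Cnat : ℕ) : ℝ) / δ⌉₊ : ℕ) : ℝ) := Nat.le_ceil _
      have h2 : ((⌈((Cnat : ℕ) : ℝ) / δ⌉₊ : ℕ) : ℝ) ≤ (p : ℝ) := by
        exact_mod_cast (by omega : ⌈((Cnat : ℕ) : ℝ) / δ⌉₊ ≤ p)
      rw [div_le_iff₀ hδ0] at h1
      nlinarith
    have hcardr : (p : ℝ) - ((Cnat : ℕ) : ℝ) ≤ (S.card : ℝ) := by exact_mod_cast hcount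
    have h1δ : (0 : ℝ) ≤ 1 - δ := by linarith
    calc (1 - δ) * Real.sqrt ((p ^ 2 - 1 : ℕ) : ℝ) ≤ (1 - δ) * (p : ℝ) :=
        mul_le_mul_of_nonneg_left hsq h1δ
      _ = (p : ℝ) - δ * (p : ℝ) := by ring
      _ ≤ (p : ℝ) - ((Cnat : ℕ) : ℝ) := by linarith
      _ ≤ (S.card : ℝ) := hcardr

theorem cover_step (F : Finset ℤ) (hF : IsSidon ↑F) (n : ℤ) (K : ℕ)
    (hn : ∀ a ∈ F, ∀ b ∈ F, a + b ≠ n) :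
    ∃ F' : Finset ℤ, F ⊆ F' ∧ IsSidon ↑F' ∧ (∃ a ∈ F', ∃ b ∈ F', a ≤ b ∧ a + b = n) ∧
      (∀ a ∈ F', a ∉ F → (K : ℤ) < |a|) := by
  set M : ℤ := ∑ f ∈ F, |f| with hMdef
  have hMf : ∀ f ∈ F, -M ≤ f ∧ f ≤ M := by
    intro f hf
    have h1 : |f| ≤ M := Finset.single_le_sum (fun i _ => abs_nonneg i) hf
    exact abs_le.mp h1
  have hM0 : 0 ≤ M := Finset.sum_nonneg fun i _ => abs_nonneg i
  have hnn : -|n| ≤ n ∧ n ≤ |n| := abs_le.mp le_rfl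
  have hnn0 : 0 ≤ |n| := abs_nonneg n
  set B : ℤ := 5 * (M + |n| + (K : ℤ) + 1) with hBdef
  have hK0 : (0 : ℤ) ≤ (K : ℤ) := Int.natCast_nonneg K
  refine ⟨F ∪ {B, n - B}, Finset.subset_union_left, ?_, ?_, ?_⟩
  · refine isSidon_union hF (isSidon_pair B (n - B)) ?_ ?_ ?_ ?_
    · intro f hf f' hf' g hg g' hg' h
      have e1 := hMf f hf; have e2 := hMf f' hf'
      simp only [Finset.mem_insert, Finset.mem_singleton] at hg hg'
      rcases hg with rfl | rfl <;> rcases hg' with rfl | rfl <;> exact ⟨by omega, by omega⟩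
    · intro f hf f' hf' g hg g' hg'
      have e1 := hMf f hf; have e2 := hMf f' hf'
      have e3 := hn f hf f' hf'
      simp only [Finset.mem_insert, Finset.mem_singleton] at hg hg'
      rcases hg with rfl | rfl <;> rcases hg' with rfl | rfl <;> omega
    · intro f hf f' hf' f'' hf'' g hg
      have e1 := hMf f hf; have e2 := hMf f' hf'; have e3 := hMf f'' hf''
      simp only [Finset.mem_insert, Finset.mem_singleton] at hg
      rcases hg with rfl | rfl <;> omega
    · intro f hf g hg g' hg' g'' hg''
      have e1 := hMf f hf
      simp only [Finset.mem_insert, Finset.mem_singleton] at hg hg' hg''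
      rcases hg with rfl | rfl <;> rcases hg' with rfl | rfl <;>
        rcases hg'' with rfl | rfl <;> omega
  · rcases le_total B (n - B) with h | h
    · exact ⟨B, by simp, n - B, by simp, h, by ring⟩
    · exact ⟨n - B, by simp, B, by simp, h, by ring⟩
  · intro a ha haF
    simp only [Finset.mem_union, Finset.mem_insert, Finset.mem_singleton] at ha
    rcases ha with ha | rfl | rfl
    · exact absurd ha haF
    · rw [abs_of_pos (by omega)]; omega
    · rw [abs_of_nonpos (by omega)]; omega

theorem step_lemma (F : Finset ℤ) (hF : IsSidon ↑F) (n : ℤ) (k : ℕ) (δ : ℝ)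
    (hδ0 : 0 < δ) (hδ1 : δ ≤ 1) :
    ∃ F' : Finset ℤ, F ⊆ F' ∧ IsSidon ↑F' ∧
      (∃ a ∈ F', ∃ b ∈ F', a ≤ b ∧ a + b = n) ∧
      (∀ a ∈ F', a ∉ F → (k : ℤ) < |a|) ∧
      ∃ x : ℕ, k < x ∧
        (1 - δ) * Real.sqrt x ≤ (((F' : Set ℤ) ∩ Set.Icc (-(x : ℤ)) (x : ℤ)).ncard : ℝ) := by
  obtain ⟨S, x, hkx, hFS, hSprop, hScard⟩ := block_step F hF k δ hδ0 hδ1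
  have hdens : ∀ F' : Finset ℤ, F ∪ S ⊆ F' →
      (1 - δ) * Real.sqrt x ≤ (((F' : Set ℤ) ∩ Set.Icc (-(x : ℤ)) (x : ℤ)).ncard : ℝ) := by
    intro F' hsub
    have hsubS : (↑S : Set ℤ) ⊆ (↑F' : Set ℤ) ∩ Set.Icc (-(x : ℤ)) (x : ℤ) := by
      intro s hs
      have hsS : s ∈ S := Finset.mem_coe.mp hs
      refine ⟨Finset.mem_coe.mpr (hsub (Finset.mem_union_right _ hsS)), ?_⟩
      have := hSprop s hsS
      exact Set.mem_Icc.mpr ⟨this.2.1, this.2.2⟩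
    have hfin : ((↑F' : Set ℤ) ∩ Set.Icc (-(x : ℤ)) (x : ℤ)).Finite :=
      (F'.finite_toSet).inter_of_left _
    have h1 : S.card ≤ ((↑F' : Set ℤ) ∩ Set.Icc (-(x : ℤ)) (x : ℤ)).ncard := by
      rw [← Set.ncard_coe_finset]
      exact Set.ncard_le_ncard hsubS hfin
    calc (1 - δ) * Real.sqrt x ≤ (S.card : ℝ) := hScard
      _ ≤ _ := by exact_mod_cast h1
  by_cases hcov : ∃ a ∈ F ∪ S, ∃ b ∈ F ∪ S, a ≤ b ∧ a + b = n
  · refine ⟨F ∪ S, Finset.subset_union_left, hFS, hcov, ?_, x, hkx, hdens _ (subset_refl _)⟩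
    intro a ha haF
    rcases Finset.mem_union.mp ha with h | h
    · exact absurd h haF
    · exact (hSprop a h).1
  · have hnrep : ∀ a ∈ F ∪ S, ∀ b ∈ F ∪ S, a + b ≠ n := by
      intro a ha b hb hab
      rcases le_total a b with h | h
      · exact hcov ⟨a, ha, b, hb, h, hab⟩
      · exact hcov ⟨b, hb, a, ha, h, by omega⟩
    obtain ⟨F', hsub, hsidon, hrep, hnew⟩ := cover_step (F ∪ S) hFS n k hnrep
    refine ⟨F', Finset.subset_union_left.trans hsub, hsidon, hrep, ?_, x, hkx, hdens _ hsub⟩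
    intro a ha haF
    by_cases hFS1 : a ∈ F ∪ S
    · rcases Finset.mem_union.mp hFS1 with h | h
      · exact absurd h haF
      · exact (hSprop a h).1
    · exact hnew a ha hFS1

theorem main_exists (δ : ℝ) (hδ0 : 0 < δ) (hδ1 : δ ≤ 1) :
    ∃ A : Set ℤ, IsSidon A ∧ UniqueRepBasis A ∧
      (∀ y : ℕ, (A ∩ Set.Icc (-(y : ℤ)) (y : ℤ)).Finite) ∧
      ∀ k : ℕ, ∃ x : ℕ, k < x ∧
        (1 - δ) * Real.sqrt x ≤ ((A ∩ Set.Icc (-(x : ℤ)) (x : ℤ)).ncard : ℝ) := by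
  classical
  have hsidE : IsSidon ↑(∅ : Finset ℤ) := by
    intro a ha
    simp at ha
  set e : ℕ → ℤ := fun k => (Denumerable.eqv ℤ).symm k with hedef
  have hesurj : ∀ n : ℤ, ∃ k, e k = n := fun n =>
    ⟨(Denumerable.eqv ℤ) n, by simp [hedef]⟩
  have hstep : ∀ (G : {G : Finset ℤ // IsSidon ↑G}) (k : ℕ),
      ∃ F' : Finset ℤ, G.1 ⊆ F' ∧ IsSidon ↑F' ∧
        (∃ a ∈ F', ∃ b ∈ F', a ≤ b ∧ a + b = e k) ∧
        (∀ a ∈ F', a ∉ G.1 → (k : ℤ) < |a|) ∧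
        ∃ x : ℕ, k < x ∧
          (1 - δ) * Real.sqrt x ≤ (((F' : Set ℤ) ∩ Set.Icc (-(x : ℤ)) (x : ℤ)).ncard : ℝ) :=
    fun G k => step_lemma G.1 G.2 (e k) k δ hδ0 hδ1
  choose f hf using hstep
  set Ch : ℕ → {G : Finset ℤ // IsSidon ↑G} := fun k =>
    Nat.rec ⟨∅, hsidE⟩ (fun k ih => ⟨f ih k, (hf ih k).2.1⟩) k with hChdef
  set F : ℕ → Finset ℤ := fun k => (Ch k).1 with hFdef
  have hFsid : ∀ k, IsSidon ↑(F k) := fun k => (Ch k).2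
  have hFsucc : ∀ k, F (k + 1) = f (Ch k) k := fun k => rfl
  have hmono : ∀ k, F k ⊆ F (k + 1) := fun k => (hf (Ch k) k).1
  have hrep : ∀ k, ∃ a ∈ F (k + 1), ∃ b ∈ F (k + 1), a ≤ b ∧ a + b = e k :=
    fun k => (hf (Ch k) k).2.2.1
  have hnew : ∀ k, ∀ a ∈ F (k + 1), a ∉ F k → (k : ℤ) < |a| :=
    fun k => (hf (Ch k) k).2.2.2.1
  have hdens : ∀ k, ∃ x : ℕ, k < x ∧
      (1 - δ) * Real.sqrt x ≤ (((F (k + 1) : Set ℤ) ∩ Set.Icc (-(x : ℤ)) (x : ℤ)).ncard : ℝ) :=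
    fun k => (hf (Ch k) k).2.2.2.2
  have hmono' : ∀ j k, j ≤ k → F j ⊆ F k := by
    intro j k hjk
    induction k with
    | zero => rw [Nat.le_zero.mp hjk]
    | succ k ih =>
        rcases Nat.lt_or_ge j (k + 1) with h | h
        · exact (ih (by omega)).trans (hmono k)
        · rw [Nat.le_antisymm hjk h]
  set A : Set ℤ := ⋃ k, (↑(F k) : Set ℤ) with hAdef
  have hmemA : ∀ a : ℤ, a ∈ A ↔ ∃ k, a ∈ F k := by
    intro a
    rw [hAdef, Set.mem_iUnion]
    simp
  have hAsidon : IsSidon A := by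
    intro a ha b hb c hc d hd h
    obtain ⟨ka, hka⟩ := (hmemA a).mp ha
    obtain ⟨kb, hkb⟩ := (hmemA b).mp hb
    obtain ⟨kc, hkc⟩ := (hmemA c).mp hc
    obtain ⟨kd, hkd⟩ := (hmemA d).mp hd
    set K := max (max ka kb) (max kc kd) with hK
    refine hFsid K a ?_ b ?_ c ?_ d ?_ h <;> rw [Finset.mem_coe]
    · exact hmono' ka K (by omega) hka
    · exact hmono' kb K (by omega) hkb
    · exact hmono' kc K (by omega) hkc
    · exact hmono' kd K (by omega) hkd
  have hfinloc : ∀ y : ℕ, (A ∩ Set.Icc (-(y : ℤ)) (y : ℤ)) ⊆ ↑(F (y + 1)) := by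
    rintro y a ⟨haA, haI⟩
    obtain ⟨k, hk⟩ := (hmemA a).mp haA
    rcases Nat.lt_or_ge k (y + 1) with h | h
    · exact hmono' k (y + 1) (by omega) hk
    · -- downward induction
      have key : ∀ j, a ∈ F (y + 1 + j) → a ∈ F (y + 1) := by
        intro j
        induction j with
        | zero => exact id
        | succ j ih =>
            intro hj
            by_cases hcase : a ∈ F (y + 1 + j)
            · exact ih hcase
            · exfalso
              have h1 := hnew (y + 1 + j) a (by rwa [show y + 1 + (j+1) = (y+1+j) + 1 by omega] at hj) hcase
              have h2 := Set.mem_Icc.mp haI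
              have h3 : |a| ≤ (y : ℤ) := abs_le.mpr h2
              have h4 : (y : ℤ) ≤ ((y + 1 + j : ℕ) : ℤ) := by push_cast; omega
              omega
      have := key (k - (y + 1)) (by rwa [show y + 1 + (k - (y+1)) = k by omega])
      exact this
  have hAfin : ∀ y : ℕ, (A ∩ Set.Icc (-(y : ℤ)) (y : ℤ)).Finite :=
    fun y => Set.Finite.subset (F (y + 1)).finite_toSet (hfinloc y)
  refine ⟨A, hAsidon, ?_, hAfin, ?_⟩
  · -- UniqueRepBasis
    intro n
    obtain ⟨k, hk⟩ := hesurj n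
    obtain ⟨a, ha, b, hb, hab, habn⟩ := hrep k
    rw [hk] at habn
    have haA : a ∈ A := (hmemA a).mpr ⟨k + 1, ha⟩
    have hbA : b ∈ A := (hmemA b).mpr ⟨k + 1, hb⟩
    have hset : {p : ℤ × ℤ | p.1 ∈ A ∧ p.2 ∈ A ∧ p.1 ≤ p.2 ∧ p.1 + p.2 = n} = {(a, b)} := by
      ext ⟨c, d⟩
      simp only [Set.mem_setOf_eq, Set.mem_singleton_iff, Prod.mk.injEq]
      constructor
      · rintro ⟨hcA, hdA, hcd, hcdn⟩
        rcases hAsidon a haA b hbA c hcA d hdA (by omega) with ⟨h1, h2⟩ | ⟨h1, h2⟩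
        · exact ⟨h1.symm, h2.symm⟩
        · constructor <;> omega
      · rintro ⟨rfl, rfl⟩
        exact ⟨haA, hbA, hab, habn⟩
    show repCount A n = 1
    simp only [repCount]
    rw [hset]
    exact Set.ncard_singleton _
  · -- density
    intro k
    obtain ⟨x, hkx, hx⟩ := hdens k
    refine ⟨x, hkx, le_trans hx ?_⟩
    have hsub : ((F (k + 1) : Set ℤ) ∩ Set.Icc (-(x : ℤ)) (x : ℤ)) ⊆
        (A ∩ Set.Icc (-(x : ℤ)) (x : ℤ)) := by
      rintro a ⟨h1, h2⟩
      exact ⟨(hmemA a).mpr ⟨k + 1, Finset.mem_coe.mp h1⟩, h2⟩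
    have := Set.ncard_le_ncard hsub (hAfin x)
    exact_mod_cast this

theorem sidon_upper (A : Set ℤ) (hA : IsSidon A) (x : ℕ)
    (hfin : (A ∩ Set.Icc (-(x : ℤ)) (x : ℤ)).Finite) (hx : 1 ≤ x) :
    ((A ∩ Set.Icc (-(x : ℤ)) (x : ℤ)).ncard : ℝ) ≤ 4 * Real.sqrt x := by
  classical
  set Fn := hfin.toFinset with hFndef
  have hcard : (A ∩ Set.Icc (-(x : ℤ)) (x : ℤ)).ncard = Fn.card :=
    Set.ncard_eq_toFinset_card _ hfin
  have hmem : ∀ a : ℤ, a ∈ Fn → a ∈ A ∧ -(x : ℤ) ≤ a ∧ a ≤ (x : ℤ) := by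
    intro a ha
    rw [hFndef, Set.Finite.mem_toFinset] at ha
    exact ⟨ha.1, Set.mem_Icc.mp ha.2⟩
  set P := (Fn ×ˢ Fn).filter (fun q => q.1 ≤ q.2) with hPdef
  set P' := (Fn ×ˢ Fn).filter (fun q => q.2 ≤ q.1) with hP'def
  have hcover : (Fn ×ˢ Fn) ⊆ P ∪ P' := by
    intro q hq
    rcases le_total q.1 q.2 with h | h
    · exact Finset.mem_union_left _ (Finset.mem_filter.mpr ⟨hq, h⟩)
    · exact Finset.mem_union_right _ (Finset.mem_filter.mpr ⟨hq, h⟩)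
  have hswap : P'.card ≤ P.card := by
    refine Finset.card_le_card_of_injOn Prod.swap ?_ ?_
    · intro q hq
      obtain ⟨hq1, hq2⟩ := Finset.mem_filter.mp hq
      refine Finset.mem_filter.mpr ⟨?_, hq2⟩
      obtain ⟨h1, h2⟩ := Finset.mem_product.mp hq1
      exact Finset.mem_product.mpr ⟨h2, h1⟩
    · intro a _ b _ h
      exact Prod.swap_injective h
  have hsq : Fn.card * Fn.card ≤ 2 * P.card := by
    have h1 : (Fn ×ˢ Fn).card = Fn.card * Fn.card := Finset.card_product _ _
    have h2 := Finset.card_le_card hcover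
    have h3 := Finset.card_union_le P P'
    omega
  have hPle : P.card ≤ 4 * x + 1 := by
    have hinj : P.card ≤ (Finset.Icc (-(2 * (x : ℤ))) (2 * x)).card := by
      refine Finset.card_le_card_of_injOn (fun q => q.1 + q.2) ?_ ?_
      · intro q hq
        obtain ⟨hq1, hq2⟩ := Finset.mem_filter.mp hq
        obtain ⟨h1, h2⟩ := Finset.mem_product.mp hq1
        have e1 := hmem _ h1
        have e2 := hmem _ h2
        rw [Finset.mem_coe, Finset.mem_Icc]
        dsimp only
        omega
      · intro q hq q' hq' h
        obtain ⟨hq1, hqle⟩ := Finset.mem_filter.mp hq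
        obtain ⟨hq'1, hq'le⟩ := Finset.mem_filter.mp hq'
        obtain ⟨h1, h2⟩ := Finset.mem_product.mp hq1
        obtain ⟨h1', h2'⟩ := Finset.mem_product.mp hq'1
        have e1 := (hmem _ h1).1
        have e2 := (hmem _ h2).1
        have e1' := (hmem _ h1').1
        have e2' := (hmem _ h2').1
        have h' : q.1 + q.2 = q'.1 + q'.2 := h
        rcases hA q.1 e1 q.2 e2 q'.1 e1' q'.2 e2' h' with ⟨u1, u2⟩ | ⟨u1, u2⟩
        · exact Prod.ext u1 u2
        · exact Prod.ext (by omega) (by omega)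
    have hIcc : (Finset.Icc (-(2 * (x : ℤ))) (2 * x)).card = 4 * x + 1 := by
      rw [Int.card_Icc, show (2 * (x : ℤ) + 1 - -(2 * x)) = 4 * (x : ℤ) + 1 from by ring]
      omega
    omega
  -- real conclusion
  have hk2 : ((Fn.card : ℝ)) ^ 2 ≤ 16 * (x : ℝ) := by
    have h10 : Fn.card * Fn.card ≤ 10 * x := by omega
    have : ((Fn.card * Fn.card : ℕ) : ℝ) ≤ ((10 * x : ℕ) : ℝ) := by exact_mod_cast h10
    push_cast at this
    nlinarith [this]
  have hsqrt : ((Fn.card : ℝ)) ≤ 4 * Real.sqrt x := by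
    have h1 : ((Fn.card : ℝ)) = Real.sqrt (((Fn.card : ℝ)) ^ 2) :=
      (Real.sqrt_sq (by positivity)).symm
    rw [h1]
    have h2 : Real.sqrt (((Fn.card : ℝ)) ^ 2) ≤ Real.sqrt (16 * (x : ℝ)) :=
      Real.sqrt_le_sqrt hk2
    have h3 : Real.sqrt (16 * (x : ℝ)) = 4 * Real.sqrt x := by
      rw [show (16 : ℝ) * x = 4 ^ 2 * x by ring, Real.sqrt_mul (by positivity) _,
        Real.sqrt_sq (by norm_num)]
    rw [← h3]
    exact h2
  rw [hcard]
  exact hsqrt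

theorem stmt_10 :
    (∀ ε : ℝ, 0 < ε → ∃ A : Set ℤ, UniqueRepBasis A ∧
      {x : ℕ | 0 < x ∧
        (1 - ε) * Real.sqrt x ≤ ((A ∩ Set.Icc (-(x : ℤ)) (x : ℤ)).ncard : ℝ)}.Infinite) ∧
    ∀ c : ℝ, c < 1 → ∃ A : Set ℤ, UniqueRepBasis A ∧
      c ≤ Filter.limsup
        (fun x : ℕ => ((A ∩ Set.Icc (-(x : ℤ)) (x : ℤ)).ncard : ℝ) / Real.sqrt x)
        Filter.atTop := by
  have main : ∀ ε : ℝ, 0 < ε → ∃ A : Set ℤ, IsSidon A ∧ UniqueRepBasis A ∧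
      (∀ y : ℕ, (A ∩ Set.Icc (-(y : ℤ)) (y : ℤ)).Finite) ∧
      ∀ k : ℕ, ∃ x : ℕ, k < x ∧
        (1 - ε) * Real.sqrt x ≤ ((A ∩ Set.Icc (-(x : ℤ)) (x : ℤ)).ncard : ℝ) := by
    intro ε hε
    obtain ⟨A, h1, h2, h3, h4⟩ := main_exists (min ε 1) (lt_min hε one_pos) (min_le_right _ _)
    refine ⟨A, h1, h2, h3, ?_⟩
    intro k
    obtain ⟨x, hkx, hx⟩ := h4 k
    refine ⟨x, hkx, le_trans ?_ hx⟩
    have hd : (1 - ε) ≤ (1 - min ε 1) := by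
      have := min_le_left ε 1
      linarith
    nlinarith [Real.sqrt_nonneg (x : ℝ)]
  constructor
  · intro ε hε
    obtain ⟨A, hAsid, hAurb, hAfin, hAdens⟩ := main ε hε
    refine ⟨A, hAurb, ?_⟩
    intro hfin
    obtain ⟨N, hN⟩ := hfin.bddAbove
    obtain ⟨x, hkx, hx⟩ := hAdens N
    have hxS : x ∈ {x : ℕ | 0 < x ∧
        (1 - ε) * Real.sqrt x ≤ ((A ∩ Set.Icc (-(x : ℤ)) (x : ℤ)).ncard : ℝ)} :=
      ⟨by omega, hx⟩
    have := hN hxS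
    omega
  · intro c hc
    obtain ⟨A, hAsid, hAurb, hAfin, hAdens⟩ := main (1 - c) (by linarith)
    refine ⟨A, hAurb, ?_⟩
    apply Filter.le_limsup_of_frequently_le
    · rw [Filter.frequently_atTop]
      intro a
      obtain ⟨x, hkx, hx⟩ := hAdens (max a 1)
      refine ⟨x, by omega, ?_⟩
      have hx0 : (0 : ℝ) < (x : ℝ) := by
        have : 1 ≤ x := by omega
        exact_mod_cast Nat.lt_of_lt_of_le Nat.zero_lt_one this
      have hsp : 0 < Real.sqrt x := Real.sqrt_pos.mpr hx0
      rw [le_div_iff₀ hsp]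
      calc c * Real.sqrt x = (1 - (1 - c)) * Real.sqrt x := by ring
        _ ≤ _ := hx
    · refine ⟨4, ?_⟩
      rw [Filter.eventually_map]
      refine Filter.Eventually.of_forall ?_
      intro x
      show ((A ∩ Set.Icc (-(x : ℤ)) (x : ℤ)).ncard : ℝ) / Real.sqrt x ≤ 4
      by_cases hx0 : x = 0
      · subst hx0
        simp
      · have hx1 : 1 ≤ x := by omega
        have hxp : (0 : ℝ) < (x : ℝ) := by exact_mod_cast Nat.pos_of_ne_zero hx0
        have hsp : 0 < Real.sqrt x := Real.sqrt_pos.mpr hxp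
        rw [div_le_iff₀ hsp]
        exact (sidon_upper A hAsid x (hAfin x) hx1).trans (by nlinarith)
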